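/- In the bidirectional structural model under Assumption 2, suppose σ > 0, γ1 > γ2², μxz ≠ 0, μyw ≠ 0 and βxy·βyx ≠ 1. Define c = 1/(1 − βxy·βyx), λ1 = σ²c²(γ1 + 2βyx·γ2 + βyx²), λ2 = σ²c²(βxy²·γ1 + 2βxy·γ2 + 1), and Probit coefficients ξxz = c·μxz/√λ1, ξxw = c·βyx·μyw/√λ1, ξyz = c·βxy·μxz/√λ2, ξyw = c·μyw/√λ2. Then λ1 > 0 and λ2 > 0, the product ξyz·ξxz has the same sign as βxy (and is zero exactly when βxy = 0), and the product ξxw·ξyw has the same sign as βyx (and is zero exactly when βyx = 0). -/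

import Mathlib

lemma sign_mul_pos_right (b K : ℝ) (hK : 0 < K) :
    Real.sign (b * K) = Real.sign b ∧ (b * K = 0 ↔ b = 0) := by
  constructor
  · rcases lt_trichotomy b 0 with h | h | h
    · rw [Real.sign_of_neg h, Real.sign_of_neg (mul_neg_of_neg_of_pos h hK)]
    · simp [h]
    · rw [Real.sign_of_pos h, Real.sign_of_pos (mul_pos h hK)]
  · constructor
    · intro h
      rcases mul_eq_zero.mp h with h | h
      · exact h
      · exact absurd h hK.ne'
    · intro h; simp [h]

/-- under Assumption 2, the reduced-form scales are positive and
the products of Probit coefficients carry the signs of the causal effects. -/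
theorem stmt_8 (μx0 μy0 μxz μyw βxy βyx σ γ1 γ2 : ℝ)
    (hσ : 0 < σ) (hγ : γ2 ^ 2 < γ1)
    (hμxz : μxz ≠ 0) (hμyw : μyw ≠ 0) (hβ : βxy * βyx ≠ 1)
    (c lam1 lam2 ξxz ξxw ξyz ξyw : ℝ)
    (hc : c = 1 / (1 - βxy * βyx))
    (hlam1 : lam1 = σ ^ 2 * c ^ 2 * (γ1 + 2 * βyx * γ2 + βyx ^ 2))
    (hlam2 : lam2 = σ ^ 2 * c ^ 2 * (βxy ^ 2 * γ1 + 2 * βxy * γ2 + 1))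
    (hξxz : ξxz = c * μxz / Real.sqrt lam1)
    (hξxw : ξxw = c * βyx * μyw / Real.sqrt lam1)
    (hξyz : ξyz = c * βxy * μxz / Real.sqrt lam2)
    (hξyw : ξyw = c * μyw / Real.sqrt lam2) :
    0 < lam1 ∧ 0 < lam2 ∧
    Real.sign (ξyz * ξxz) = Real.sign βxy ∧ (ξyz * ξxz = 0 ↔ βxy = 0) ∧
    Real.sign (ξxw * ξyw) = Real.sign βyx ∧ (ξxw * ξyw = 0 ↔ βyx = 0) := by
  have hc0 : c ≠ 0 := by
    rw [hc]
    have : 1 - βxy * βyx ≠ 0 := by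
      intro h; apply hβ; linarith [sub_eq_zero.mp h]
    simp [this]
  have hc2 : 0 < c ^ 2 := by positivity
  have hq1 : 0 < γ1 + 2 * βyx * γ2 + βyx ^ 2 := by nlinarith [sq_nonneg (γ2 + βyx)]
  have hq2 : 0 < βxy ^ 2 * γ1 + 2 * βxy * γ2 + 1 := by
    rcases eq_or_ne βxy 0 with h | h
    · simp [h]
    · nlinarith [sq_nonneg (βxy * γ2 + 1), mul_pos (pow_pos (abs_pos.mpr h) 2) (sub_pos.mpr hγ), sq_abs βxy]
  have h1 : 0 < lam1 := by rw [hlam1]; positivity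
  have h2 : 0 < lam2 := by rw [hlam2]; positivity
  have hs1 : 0 < Real.sqrt lam1 := Real.sqrt_pos.mpr h1
  have hs2 : 0 < Real.sqrt lam2 := Real.sqrt_pos.mpr h2
  refine ⟨h1, h2, ?_⟩
  have e1 : ξyz * ξxz = βxy * (c ^ 2 * μxz ^ 2 / (Real.sqrt lam2 * Real.sqrt lam1)) := by
    rw [hξyz, hξxz]; field_simp
  have e2 : ξxw * ξyw = βyx * (c ^ 2 * μyw ^ 2 / (Real.sqrt lam1 * Real.sqrt lam2)) := by
    rw [hξxw, hξyw]; field_simp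
  have hK1 : 0 < c ^ 2 * μxz ^ 2 / (Real.sqrt lam2 * Real.sqrt lam1) := by positivity
  have hK2 : 0 < c ^ 2 * μyw ^ 2 / (Real.sqrt lam1 * Real.sqrt lam2) := by positivity
  obtain ⟨a1, a2⟩ := sign_mul_pos_right βxy _ hK1
  obtain ⟨b1, b2⟩ := sign_mul_pos_right βyx _ hK2
  exact ⟨by rw [e1, a1], by rw [e1]; exact a2, by rw [e2, b1], by rw [e2]; exact b2⟩
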